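/- arXiv:1408.3960 — 2 statements merged into one kernel-verified Lean document; each statement's English description precedes it below -/
import Mathlib

section
/- Let f : X → X be a continuous map of a compact metric space X. Define Ĉ⁰_f(X) = {φ ∈ C⁰(X) : I(φ,f) ≠ ∅}, the set of truly-observable continuous functions. If Ĉ⁰_f(X) is nonempty, then Ĉ⁰_f(X) is an open and dense subset of C⁰(X) with the supremum norm. -/
open MeasureTheory Filter Topology
open scoped ENNReal

/-- The `n`-th Birkhoff average of the observable `φ` at the point `x`:
`(1/n) ∑_{i=0}^{n-1} φ(f^i x)`. -/
noncomputable def birkhoffAvg {X : Type*} (f : X → X) (φ : X → ℝ) (n : ℕ) (x : X) : ℝ :=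
  (n : ℝ)⁻¹ * ∑ i ∈ Finset.range n, φ (f^[i] x)

/-- The `φ`-irregular set `I(φ,f)`: points whose Birkhoff averages do not converge. -/
def irregularSet {X : Type*} (f : X → X) (φ : X → ℝ) : Set X :=
  {x | ¬ ∃ L : ℝ, Filter.Tendsto (fun n => birkhoffAvg f φ n x) Filter.atTop (nhds L)}

/-- `M_x(f)`: the set of weak* limit points of the empirical measures
`E_n(x) = (1/n) ∑ δ_{f^i x}`, characterized by convergence of the integrals
(= Birkhoff averages) of every continuous function along a subsequence. -/
def limitMeasures {X : Type*} [TopologicalSpace X] [MeasurableSpace X]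
    (f : X → X) (x : X) : Set (MeasureTheory.Measure X) :=
  {μ | MeasureTheory.IsProbabilityMeasure μ ∧ ∃ ns : ℕ → ℕ, StrictMono ns ∧
    ∀ ψ : C(X, ℝ), Filter.Tendsto (fun j => birkhoffAvg f (⇑ψ) (ns j) x) Filter.atTop
      (nhds (∫ y, ψ y ∂μ))}

/-- The set `M_f(X)` of `f`-invariant Borel probability measures. -/
def invariantProb {X : Type*} [MeasurableSpace X] (f : X → X) :
    Set (MeasureTheory.Measure X) :=
  {μ | MeasureTheory.IsProbabilityMeasure μ ∧ μ.map f = μ}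

lemma birkhoff_diff {X : Type*} [MetricSpace X] [CompactSpace X] (f : X → X)
    (φ ψ : C(X, ℝ)) (n : ℕ) (x : X) :
    |birkhoffAvg f ⇑φ n x - birkhoffAvg f ⇑ψ n x| ≤ ‖φ - ψ‖ := by
  rcases Nat.eq_zero_or_pos n with rfl | hn
  · simp [birkhoffAvg, norm_nonneg]
  · have : birkhoffAvg f ⇑φ n x - birkhoffAvg f ⇑ψ n x
        = (n : ℝ)⁻¹ * ∑ i ∈ Finset.range n, (φ (f^[i] x) - ψ (f^[i] x)) := by
      simp [birkhoffAvg, Finset.sum_sub_distrib, mul_sub]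
    rw [this, abs_mul, abs_of_nonneg (show (0:ℝ) ≤ (n:ℝ)⁻¹ by positivity)]
    have h2 : |∑ i ∈ Finset.range n, (φ (f^[i] x) - ψ (f^[i] x))| ≤ n * ‖φ - ψ‖ := by
      calc |∑ i ∈ Finset.range n, (φ (f^[i] x) - ψ (f^[i] x))|
          ≤ ∑ i ∈ Finset.range n, |φ (f^[i] x) - ψ (f^[i] x)| :=
            Finset.abs_sum_le_sum_abs _ _
        _ ≤ ∑ i ∈ Finset.range n, ‖φ - ψ‖ :=
            Finset.sum_le_sum fun i _ => (φ - ψ).norm_coe_le_norm (f^[i] x)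
        _ = n * ‖φ - ψ‖ := by simp [mul_comm]
    calc (n:ℝ)⁻¹ * |∑ i ∈ Finset.range n, (φ (f^[i] x) - ψ (f^[i] x))|
        ≤ (n:ℝ)⁻¹ * (n * ‖φ - ψ‖) := mul_le_mul_of_nonneg_left h2 (by positivity)
      _ = ‖φ - ψ‖ := by field_simp

lemma irregular_iff_not_cauchy {X : Type*} (f : X → X) (φ : X → ℝ) (x : X) :
    x ∈ irregularSet f φ ↔ ¬ CauchySeq (fun n => birkhoffAvg f φ n x) := by
  constructor
  · intro hx hc
    exact hx (cauchySeq_tendsto_of_complete hc)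
  · intro hc ⟨L, hL⟩
    exact hc hL.cauchySeq

lemma birkhoff_add_smul {X : Type*} [MetricSpace X] [CompactSpace X] (f : X → X)
    (ψ φ₀ : C(X, ℝ)) (t : ℝ) (n : ℕ) (x : X) :
    birkhoffAvg f ⇑(ψ + t • φ₀) n x
      = birkhoffAvg f ⇑ψ n x + t * birkhoffAvg f ⇑φ₀ n x := by
  have hsum : ∑ i ∈ Finset.range n, (ψ + t • φ₀) (f^[i] x)
      = (∑ i ∈ Finset.range n, ψ (f^[i] x)) + t * ∑ i ∈ Finset.range n, φ₀ (f^[i] x) := by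
    simp [Finset.sum_add_distrib, Finset.mul_sum]
  simp only [birkhoffAvg, hsum]
  ring


/-- if the set of truly-observable continuous functions
`Ĉ⁰_f(X) = {φ : I(φ,f) ≠ ∅}` is nonempty, then it is open and dense in `C(X,ℝ)`
(with the sup-norm topology). -/
theorem stmt4 {X : Type*} [MetricSpace X] [CompactSpace X]
    (f : X → X) (hf : Continuous f)
    (h : {φ : C(X, ℝ) | (irregularSet f ⇑φ).Nonempty}.Nonempty) :
    IsOpen {φ : C(X, ℝ) | (irregularSet f ⇑φ).Nonempty} ∧
      Dense {φ : C(X, ℝ) | (irregularSet f ⇑φ).Nonempty} := by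
  constructor
  · -- openness
    rw [Metric.isOpen_iff]
    rintro φ ⟨x, hx⟩
    rw [irregular_iff_not_cauchy, Metric.cauchySeq_iff] at hx
    push_neg at hx
    obtain ⟨ε, hε, hbad⟩ := hx
    refine ⟨ε / 4, by positivity, ?_⟩
    intro ψ hψ
    rw [Metric.mem_ball, dist_eq_norm] at hψ
    refine ⟨x, ?_⟩
    rw [irregular_iff_not_cauchy]
    intro hc
    rw [Metric.cauchySeq_iff] at hc
    obtain ⟨N, hN⟩ := hc (ε / 2) (by positivity)
    obtain ⟨m, hm, n, hn, hmn⟩ := hbad N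
    have h1 := birkhoff_diff f φ ψ m x
    have h2 := birkhoff_diff f φ ψ n x
    have h3 := hN m hm n hn
    rw [Real.dist_eq] at h3 hmn
    have hφψ : ‖φ - ψ‖ < ε / 4 := by rwa [← norm_neg, neg_sub] at hψ
    have : |birkhoffAvg f (⇑φ) m x - birkhoffAvg f (⇑φ) n x| < ε := by
      calc |birkhoffAvg f (⇑φ) m x - birkhoffAvg f (⇑φ) n x|
          ≤ |birkhoffAvg f (⇑φ) m x - birkhoffAvg f (⇑ψ) m x|
            + |birkhoffAvg f (⇑ψ) m x - birkhoffAvg f (⇑ψ) n x|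
            + |birkhoffAvg f (⇑ψ) n x - birkhoffAvg f (⇑φ) n x| := by
              have := abs_sub_le (birkhoffAvg f (⇑φ) m x) (birkhoffAvg f (⇑ψ) n x)
                (birkhoffAvg f (⇑φ) n x)
              have := abs_sub_le (birkhoffAvg f (⇑φ) m x) (birkhoffAvg f (⇑ψ) m x)
                (birkhoffAvg f (⇑ψ) n x)
              linarith [abs_sub_le (birkhoffAvg f (⇑φ) m x) (birkhoffAvg f (⇑ψ) m x)
                (birkhoffAvg f (⇑φ) n x),
                abs_sub_le (birkhoffAvg f (⇑ψ) m x) (birkhoffAvg f (⇑ψ) n x)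
                (birkhoffAvg f (⇑φ) n x)]
      _ < ε / 4 + ε / 2 + ε / 4 := by
          have h2' : |birkhoffAvg f (⇑ψ) n x - birkhoffAvg f (⇑φ) n x| ≤ ‖φ - ψ‖ := by
            rwa [abs_sub_comm]
          linarith
      _ = ε := by ring
    linarith
  · -- density
    rw [Metric.dense_iff]
    intro ψ ε hε
    by_cases hψ : (irregularSet f ⇑ψ).Nonempty
    · exact ⟨ψ, Metric.mem_ball_self hε, hψ⟩
    · obtain ⟨φ₀, x, hx⟩ := h
      rw [Set.not_nonempty_iff_eq_empty] at hψ
      have hxψ : x ∉ irregularSet f ⇑ψ := by rw [hψ]; exact Set.notMem_empty x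
      have hA : ∃ A, Tendsto (fun n => birkhoffAvg f (⇑ψ) n x) atTop (nhds A) := by
        by_contra hcon; exact hxψ hcon
      obtain ⟨A, hA⟩ := hA
      have hφ₀ : ‖φ₀‖ > 0 := by
        rcases eq_or_lt_of_le (norm_nonneg φ₀) with h0 | h0
        · exfalso
          have : φ₀ = 0 := by rw [← norm_eq_zero]; exact h0.symm
          apply hx
          refine ⟨0, ?_⟩
          have : ∀ n, birkhoffAvg f (⇑φ₀) n x = 0 := by
            intro n; simp [birkhoffAvg, this]
          simpa [this] using tendsto_const_nhds
        · exact h0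
      set t := ε / (2 * ‖φ₀‖) with ht_def
      have ht : 0 < t := by positivity
      refine ⟨ψ + t • φ₀, ?_, x, ?_⟩
      · rw [Metric.mem_ball, dist_eq_norm]
        have : ψ + t • φ₀ - ψ = t • φ₀ := by abel
        rw [this]
        have hns : ‖t • φ₀‖ = t * ‖φ₀‖ := by
          rw [norm_smul (t) (φ₀), Real.norm_eq_abs, abs_of_pos ht]
        rw [hns, ht_def]
        rw [div_mul_eq_mul_div]
        rw [div_lt_iff₀ (by positivity)]
        nlinarith [hφ₀]
      · rintro ⟨L, hL⟩
        apply hx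
        refine ⟨(L - A) / t, ?_⟩
        have key : ∀ n, birkhoffAvg f (⇑φ₀) n x
            = (birkhoffAvg f (⇑(ψ + t • φ₀)) n x - birkhoffAvg f (⇑ψ) n x) / t := by
          intro n
          rw [birkhoff_add_smul]
          field_simp
          ring
        have : Tendsto (fun n => (birkhoffAvg f (⇑(ψ + t • φ₀)) n x
            - birkhoffAvg f (⇑ψ) n x) / t) atTop (nhds ((L - A) / t)) :=
          (hL.sub hA).div_const t
        rw [show (fun n => birkhoffAvg f (⇑φ₀) n x)
          = fun n => (birkhoffAvg f (⇑(ψ + t • φ₀)) n x - birkhoffAvg f (⇑ψ) n x) / t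
          from funext key]
        exact this
end

section
/- Let f : X → X be a continuous map of a compact metric space X. Suppose x ∈ X is a point such that for every continuous φ with I(φ,f) ≠ ∅ one has x ∈ I(φ,f) (x is completely-irregular). Assume further that whenever two invariant measures give different integrals to some continuous φ, then I(φ,f) ≠ ∅ (e.g. f has specification). Then supp(ν) ⊆ ω_f(x) for every f-invariant Borel probability measure ν; i.e. ν(ω_f(x)) = 1 for all invariant ν. -/
open MeasureTheory Filter Topology
open scoped ENNReal

/-- The ω-limit set of `x` under `f`. -/
def omegaSet {X : Type*} [TopologicalSpace X] (f : X → X) (x : X) : Set X :=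
  ⋂ N : ℕ, closure {y | ∃ n, N ≤ n ∧ f^[n] x = y}

/-- The topological support of a measure. -/
def measSupport {X : Type*} [TopologicalSpace X] [MeasurableSpace X]
    (μ : MeasureTheory.Measure X) : Set X :=
  {y | ∀ U : Set X, IsOpen U → y ∈ U → 0 < μ U}

open BoundedContinuousFunction TopologicalSpace
open scoped NNReal

section AuxAvg

variable {X : Type*} (f : X → X) (φ ψ : X → ℝ) (x : X)

lemma birkhoffAvg_add (n : ℕ) :
    birkhoffAvg f (fun z => φ z + ψ z) n x = birkhoffAvg f φ n x + birkhoffAvg f ψ n x := by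
  simp [birkhoffAvg, Finset.sum_add_distrib, mul_add]

lemma birkhoffAvg_const_mul (c : ℝ) (n : ℕ) :
    birkhoffAvg f (fun z => c * φ z) n x = c * birkhoffAvg f φ n x := by
  simp only [birkhoffAvg, Finset.mul_sum]
  rw [← Finset.sum_congr rfl (fun i _ => rfl)]
  ring_nf

lemma birkhoffAvg_mem_Icc {C : ℝ} (h : ∀ z, φ z ∈ Set.Icc 0 C) (n : ℕ) :
    birkhoffAvg f φ n x ∈ Set.Icc (0:ℝ) C := by
  have hC : (0:ℝ) ≤ C := le_trans (h x).1 (h x).2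
  rcases Nat.eq_zero_or_pos n with rfl | hn
  · simp [birkhoffAvg, hC]
  constructor
  · exact mul_nonneg (by positivity) (Finset.sum_nonneg fun i _ => (h _).1)
  · have hsum : ∑ i ∈ Finset.range n, φ (f^[i] x) ≤ (n : ℝ) * C := by
      calc ∑ i ∈ Finset.range n, φ (f^[i] x) ≤ ∑ i ∈ Finset.range n, C :=
            Finset.sum_le_sum fun i _ => (h _).2
        _ = (n : ℝ) * C := by simp
    have hn' : (0:ℝ) < n := by exact_mod_cast hn
    calc birkhoffAvg f φ n x ≤ (n:ℝ)⁻¹ * ((n:ℝ) * C) := by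
          exact mul_le_mul_of_nonneg_left hsum (by positivity)
      _ = C := by field_simp

lemma birkhoffAvg_one_le {n : ℕ} (hn : 1 ≤ n) (h : ∀ z, 1 ≤ φ z) :
    1 ≤ birkhoffAvg f φ n x := by
  have hsum : (n : ℝ) ≤ ∑ i ∈ Finset.range n, φ (f^[i] x) := by
    calc (n:ℝ) = ∑ _i ∈ Finset.range n, (1:ℝ) := by simp
      _ ≤ _ := Finset.sum_le_sum fun i _ => h _
  have hn' : (0:ℝ) < n := by exact_mod_cast hn
  calc (1:ℝ) = (n:ℝ)⁻¹ * n := by field_simp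
    _ ≤ _ := mul_le_mul_of_nonneg_left hsum (by positivity)

lemma birkhoffAvg_shift (n : ℕ) :
    birkhoffAvg f (fun z => φ (f z)) n x
      = birkhoffAvg f φ n x + (n:ℝ)⁻¹ * (φ (f^[n] x) - φ x) := by
  have key : ∑ i ∈ Finset.range n, φ (f^[i+1] x)
      = ∑ i ∈ Finset.range n, φ (f^[i] x) + φ (f^[n] x) - φ (f^[0] x) := by
    have h1 := Finset.sum_range_succ' (fun i => φ (f^[i] x)) n
    have h2 := Finset.sum_range_succ (fun i => φ (f^[i] x)) n
    rw [h2] at h1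
    linarith
  have hcomp : ∀ i, φ (f (f^[i] x)) = φ (f^[i+1] x) := fun i => by
    rw [Function.iterate_succ_apply']
  simp only [birkhoffAvg]
  calc (n:ℝ)⁻¹ * ∑ i ∈ Finset.range n, φ (f (f^[i] x))
      = (n:ℝ)⁻¹ * ∑ i ∈ Finset.range n, φ (f^[i+1] x) := by
        congr 1; exact Finset.sum_congr rfl fun i _ => hcomp i
    _ = (n:ℝ)⁻¹ * (∑ i ∈ Finset.range n, φ (f^[i] x) + (φ (f^[n] x) - φ x)) := by
        rw [key, Function.iterate_zero_apply]; ring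
    _ = _ := by rw [mul_add]

lemma tendsto_birkhoffAvg_zero {N : ℕ} (h : ∀ n, N ≤ n → φ (f^[n] x) = 0) :
    Tendsto (fun n => birkhoffAvg f φ n x) atTop (𝓝 0) := by
  set S : ℝ := ∑ i ∈ Finset.range N, φ (f^[i] x) with hS
  have hev : ∀ n, N ≤ n → birkhoffAvg f φ n x = (n:ℝ)⁻¹ * S := by
    intro n hn
    have : ∑ i ∈ Finset.range n, φ (f^[i] x) = S := by
      rw [hS]
      refine (Finset.sum_subset (Finset.range_subset_range.2 hn) ?_).symm
      intro i _ hiN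
      exact h i (by simpa using hiN)
    rw [birkhoffAvg, this]
  have hlim : Tendsto (fun n : ℕ => (n:ℝ)⁻¹ * S) atTop (𝓝 0) := by
    have := (tendsto_inv_atTop_nhds_zero_nat).mul_const S
    simpa using this
  exact hlim.congr' (by filter_upwards [eventually_ge_atTop N] with n hn using (hev n hn).symm)

end AuxAvg

theorem exists_invariant_measure_tail {X : Type*} [MetricSpace X] [CompactSpace X]
    [MeasurableSpace X] [BorelSpace X]
    (f : X → X) (hf : Continuous f) (x : X) (N : ℕ) :
    ∃ μ : Measure X, IsProbabilityMeasure μ ∧ μ.map f = μ ∧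
      μ ((closure {y | ∃ n, N ≤ n ∧ f^[n] x = y})ᶜ) = 0 := by
  classical
  set U : Ultrafilter ℕ := Ultrafilter.of atTop with hUdef
  have hU : (U : Filter ℕ) ≤ atTop := Ultrafilter.of_le _
  -- boundedness of NNReal-valued bounded continuous functions
  have hbdd : ∀ g : X →ᵇ ℝ≥0, ∃ C : ℝ, ∀ z, ((g z : ℝ)) ∈ Set.Icc (0:ℝ) C := by
    intro g
    obtain ⟨C, hC⟩ := g.bounded
    refine ⟨C + (g x : ℝ), fun z => ⟨(g z).coe_nonneg, ?_⟩⟩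
    have := hC z x
    rw [NNReal.dist_eq] at this
    have h2 : (g z : ℝ) - (g x : ℝ) ≤ C := le_trans (le_abs_self _) this
    linarith
  -- existence of the ultrafilter limit of Birkhoff averages
  have hex : ∀ g : X →ᵇ ℝ≥0, ∃ l : ℝ,
      Tendsto (fun n => birkhoffAvg f (fun z => (g z : ℝ)) n x) (U : Filter ℕ) (𝓝 l) := by
    intro g
    obtain ⟨C, hC⟩ := hbdd g
    have hmem : ∀ n, birkhoffAvg f (fun z => (g z : ℝ)) n x ∈ Set.Icc (0:ℝ) C :=
      birkhoffAvg_mem_Icc f _ x hC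
    have hle : (U.map (fun n => birkhoffAvg f (fun z => (g z : ℝ)) n x) : Filter ℝ)
        ≤ 𝓟 (Set.Icc (0:ℝ) C) := by
      rw [Ultrafilter.coe_map]
      exact le_principal_iff.2 (Filter.mem_map.2 (Filter.univ_mem' hmem))
    obtain ⟨l, _, hl⟩ := (isCompact_Icc (a := (0:ℝ)) (b := C)).ultrafilter_le_nhds _ hle
    exact ⟨l, by rwa [Ultrafilter.coe_map] at hl⟩
  choose L hL using hex
  have hLnn : ∀ g, 0 ≤ L g := by
    intro g
    obtain ⟨C, hC⟩ := hbdd g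
    exact ge_of_tendsto' (hL g) fun n => (birkhoffAvg_mem_Icc f _ x hC n).1
  have hLadd : ∀ g₁ g₂, L (g₁ + g₂) = L g₁ + L g₂ := by
    intro g₁ g₂
    refine tendsto_nhds_unique (hL (g₁ + g₂)) ?_
    have h := (hL g₁).add (hL g₂)
    refine h.congr fun n => ?_
    rw [← birkhoffAvg_add]
    congr 1
  have hLsmul : ∀ (c : ℝ≥0) g, L (c • g) = (c : ℝ) * L g := by
    intro c g
    refine tendsto_nhds_unique (hL (c • g)) ?_
    have h := (hL g).const_mul (c : ℝ)
    refine h.congr fun n => ?_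
    rw [← birkhoffAvg_const_mul]
    congr 1
  have hLone : L 1 = 1 := by
    refine tendsto_nhds_unique (hL 1) (tendsto_const_nhds.congr' ?_)
    have hev : ∀ᶠ n in (U : Filter ℕ), 1 ≤ n := (eventually_ge_atTop 1).filter_mono hU
    filter_upwards [hev] with n hn
    have h1 : ∀ z : X, (1:ℝ) ≤ (((1 : X →ᵇ ℝ≥0) z : ℝ)) := fun z => by simp
    have h2 : ∀ z : X, (((1 : X →ᵇ ℝ≥0) z : ℝ)) ∈ Set.Icc (0:ℝ) 1 := fun z => by simp
    have := birkhoffAvg_one_le f (fun z => (((1 : X →ᵇ ℝ≥0) z : ℝ))) x hn h1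
    have h3 := (birkhoffAvg_mem_Icc f (fun z => (((1 : X →ᵇ ℝ≥0) z : ℝ))) x h2 n).2
    linarith
  have hLge1 : ∀ g : X →ᵇ ℝ≥0, (∀ z ∈ (Set.univ : Set X), (1:ℝ≥0) ≤ g z) → 1 ≤ L g := by
    intro g hg
    refine ge_of_tendsto (hL g) ?_
    filter_upwards [(eventually_ge_atTop 1).filter_mono hU] with n hn
    exact birkhoffAvg_one_le f _ x hn fun z => by
      exact_mod_cast hg z (Set.mem_univ z)
  have hLshift : ∀ g : X →ᵇ ℝ≥0, L (g.compContinuous ⟨f, hf⟩) = L g := by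
    intro g
    obtain ⟨C, hC⟩ := hbdd g
    refine tendsto_nhds_unique (hL _) ?_
    have herr : Tendsto (fun n : ℕ => (n:ℝ)⁻¹ * ((g (f^[n] x) : ℝ) - (g x : ℝ)))
        atTop (𝓝 0) := by
      refine squeeze_zero_norm (a := fun n : ℕ => (n:ℝ)⁻¹ * C) (fun n => ?_) ?_
      · rw [norm_mul, norm_inv, Real.norm_natCast]
        refine mul_le_mul_of_nonneg_left ?_ (by positivity)
        rw [Real.norm_eq_abs, abs_sub_le_iff]
        constructor
        · have := (hC (f^[n] x)).2; have := (hC x).1; linarith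
        · have := (hC x).2; have := (hC (f^[n] x)).1; linarith
      · have := (tendsto_inv_atTop_nhds_zero_nat).mul_const C
        simpa using this
    have h := (hL g).add (herr.mono_left hU)
    rw [add_zero] at h
    refine h.congr fun n => ?_
    rw [← birkhoffAvg_shift f (fun z => (g z : ℝ)) x n]
    congr 1
  have hLtail : ∀ g : X →ᵇ ℝ≥0, (∀ n, N ≤ n → g (f^[n] x) = 0) → L g = 0 := by
    intro g hg
    refine tendsto_nhds_unique (hL g) ?_
    refine Tendsto.mono_left ?_ hU
    exact tendsto_birkhoffAvg_zero f _ x (fun n hn => by rw [hg n hn]; simp)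
  -- the positive linear functional
  set Λ : (X →ᵇ ℝ≥0) →ₗ[ℝ≥0] ℝ≥0 :=
    { toFun := fun g => (L g).toNNReal
      map_add' := fun g₁ g₂ => by
        show (L (g₁ + g₂)).toNNReal = (L g₁).toNNReal + (L g₂).toNNReal
        rw [hLadd]; exact Real.toNNReal_add (hLnn g₁) (hLnn g₂)
      map_smul' := fun c g => by
        show (L (c • g)).toNNReal = c • (L g).toNNReal
        simp only [smul_eq_mul]
        rw [hLsmul, Real.toNNReal_mul (NNReal.coe_nonneg c), Real.toNNReal_coe] } with hΛdef
  have hΛapp : ∀ g, Λ g = (L g).toNNReal := fun g => rfl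
  set Λc : CompactlySupportedContinuousMap X ℝ≥0 →ₗ[ℝ≥0] ℝ≥0 :=
    { toFun := fun g => Λ g.toBoundedContinuousFunction
      map_add' := fun g₁ g₂ => by
        rw [← map_add]; congr 1
      map_smul' := fun c g => by
        rw [RingHom.id_apply, ← map_smul]; congr 1 } with hΛcdef
  have hΛcapp : ∀ g, Λc g = Λ g.toBoundedContinuousFunction := fun g => rfl
  -- additivity of the Riesz content on disjoint compacts
  have hsd : ∀ (K₁ K₂ : Compacts X), Disjoint (K₁ : Set X) K₂ → IsClosed (K₁ : Set X) →
      IsClosed (K₂ : Set X) →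
      rieszContentAux Λc (K₁ ⊔ K₂) = rieszContentAux Λc K₁ + rieszContentAux Λc K₂ := by
    intro K₁ K₂ hd h₁ h₂
    refine le_antisymm (rieszContentAux_sup_le Λc K₁ K₂) ?_
    refine le_csInf (rieszContentAux_image_nonempty Λc (K₁ ⊔ K₂)) ?_
    rintro b ⟨g, hg, rfl⟩
    obtain ⟨u, hu0, hu1, hu01⟩ := exists_continuous_zero_one_of_isClosed h₂ h₁ hd.symm
    set p₁ : X →ᵇ ℝ≥0 := BoundedContinuousFunction.mkOfCompact
      ⟨fun z => g z * Real.toNNReal (u z),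
        (map_continuous g).mul (continuous_real_toNNReal.comp (map_continuous u))⟩ with hp₁
    set p₂ : X →ᵇ ℝ≥0 := BoundedContinuousFunction.mkOfCompact
      ⟨fun z => g z * Real.toNNReal (1 - u z),
        (map_continuous g).mul (continuous_real_toNNReal.comp
          (continuous_const.sub (map_continuous u)))⟩ with hp₂
    have hz1 : ∀ z, Real.toNNReal (u z) + Real.toNNReal (1 - u z) = 1 := by
      intro z
      have h0 := (hu01 z).1
      have h1 := (hu01 z).2
      rw [← Real.toNNReal_add h0 (by linarith), show u z + (1 - u z) = 1 by ring,
        Real.toNNReal_one]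
    have hsum : p₁ + p₂ = g.toBoundedContinuousFunction := by
      ext z
      simp only [BoundedContinuousFunction.add_apply, hp₁, hp₂,
        CompactlySupportedContinuousMap.toBoundedContinuousFunction_apply,
        BoundedContinuousFunction.mkOfCompact_apply, ContinuousMap.coe_mk]
      rw [← mul_add, hz1 z, mul_one]
    have hle1 : rieszContentAux Λc K₁ ≤ Λ p₁ := by
      refine le_trans (rieszContentAux_le Λc
        (f := CompactlySupportedContinuousMap.continuousMapEquiv p₁.toContinuousMap)
        (fun z hz => ?_)) (le_of_eq (by rw [hΛcapp]; congr 1))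
      show 1 ≤ p₁ z
      have hu : u z = 1 := hu1 hz
      have hval : p₁ z = g z * Real.toNNReal (u z) := rfl
      rw [hval, hu, Real.toNNReal_one, mul_one]
      exact hg z (Set.mem_union_left _ hz)
    have hle2 : rieszContentAux Λc K₂ ≤ Λ p₂ := by
      refine le_trans (rieszContentAux_le Λc
        (f := CompactlySupportedContinuousMap.continuousMapEquiv p₂.toContinuousMap)
        (fun z hz => ?_)) (le_of_eq (by rw [hΛcapp]; congr 1))
      show 1 ≤ p₂ z
      have hu : u z = 0 := hu0 hz
      have hval : p₂ z = g z * Real.toNNReal (1 - u z) := rfl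
      rw [hval, hu]
      norm_num
      exact hg z (Set.mem_union_right _ hz)
    rw [hΛcapp]
    calc rieszContentAux Λc K₁ + rieszContentAux Λc K₂ ≤ Λ p₁ + Λ p₂ := add_le_add hle1 hle2
      _ = Λ (p₁ + p₂) := (map_add Λ p₁ p₂).symm
      _ = Λ g.toBoundedContinuousFunction := by rw [hsum]
  set Con : Content X :=
    { toFun := fun K => rieszContentAux Λc K
      mono' := fun K₁ K₂ h => rieszContentAux_mono Λc h
      sup_disjoint' := hsd
      sup_le' := fun K₁ K₂ => rieszContentAux_sup_le Λc K₁ K₂ } with hCon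
  set μ : Measure X := Con.measure with hμ
  -- the content of any compact is at most 1
  have hΛ1 : Λ 1 = 1 := by rw [hΛapp, hLone, Real.toNNReal_one]
  have hconle : ∀ K : Compacts X, rieszContentAux Λc K ≤ 1 := by
    intro K
    have := rieszContentAux_le Λc (K := K)
      (f := CompactlySupportedContinuousMap.continuousMapEquiv (1 : C(X, ℝ≥0))) (fun z _ => by simp)
    have e : (CompactlySupportedContinuousMap.continuousMapEquiv
        (1 : C(X, ℝ≥0))).toBoundedContinuousFunction = 1 := by ext z; simp
    rw [hΛcapp] at this
    rwa [e, hΛ1] at this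
  have hconuniv : (1:ℝ≥0) ≤ rieszContentAux Λc ⟨Set.univ, isCompact_univ⟩ := by
    refine le_csInf (rieszContentAux_image_nonempty Λc _) ?_
    rintro b ⟨g, hg, rfl⟩
    have := hLge1 g.toBoundedContinuousFunction (fun z _ => hg z trivial)
    rw [hΛcapp, hΛapp]
    exact le_trans (by rw [Real.toNNReal_one]) (Real.toNNReal_mono this)
  -- μ is a probability measure
  have hμuniv : μ Set.univ = 1 := by
    rw [hμ, Con.measure_apply MeasurableSet.univ,
      Con.outerMeasure_of_isOpen Set.univ isOpen_univ]
    refine le_antisymm ?_ ?_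
    · refine iSup_le fun K => iSup_le fun _ => ?_
      exact le_trans (ENNReal.coe_le_coe.2 (hconle K)) (by simp)
    · refine le_trans ?_ (Con.le_innerContent ⟨Set.univ, isCompact_univ⟩ _ (by simp))
      calc (1:ℝ≥0∞) = ((1:ℝ≥0) : ℝ≥0∞) := by simp
        _ ≤ _ := ENNReal.coe_le_coe.2 hconuniv
  have hμprob : IsProbabilityMeasure μ := ⟨hμuniv⟩
  -- invariance
  have hkey1 : ∀ K : Compacts X, rieszContentAux Λc K ≤ rieszContentAux Λc (K.map f hf) := by
    intro K
    refine le_csInf (rieszContentAux_image_nonempty Λc _) ?_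
    rintro b ⟨g, hg, rfl⟩
    have h1 : rieszContentAux Λc K ≤ Λc (CompactlySupportedContinuousMap.continuousMapEquiv
        (g.toContinuousMap.comp ⟨f, hf⟩)) := by
      refine rieszContentAux_le Λc (fun z hz => ?_)
      exact hg (f z) (by exact ⟨z, hz, rfl⟩)
    have e : (CompactlySupportedContinuousMap.continuousMapEquiv
        (g.toContinuousMap.comp ⟨f, hf⟩)).toBoundedContinuousFunction
        = g.toBoundedContinuousFunction.compContinuous ⟨f, hf⟩ := by ext z; rfl
    rwa [hΛcapp, e, hΛapp, hLshift, ← hΛapp, ← hΛcapp] at h1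
  have hkey2 : ∀ s : Set X, Con.outerMeasure (f ⁻¹' s) ≤ Con.outerMeasure s := by
    intro s
    rw [Con.outerMeasure_eq_iInf s]
    refine le_iInf fun V => le_iInf fun hV => le_iInf fun hsV => ?_
    have h1 : Con.outerMeasure (f ⁻¹' s) ≤ Con.innerContent ⟨f ⁻¹' V, hV.preimage hf⟩ := by
      rw [← Con.outerMeasure_of_isOpen (f ⁻¹' V) (hV.preimage hf)]
      exact measure_mono (Set.preimage_mono hsV)
    refine le_trans h1 ?_
    refine iSup_le fun K => iSup_le fun hK => ?_
    have h2 : ((K.map f hf : Set X)) ⊆ V := by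
      rw [Compacts.coe_map]
      exact Set.image_subset_iff.2 hK
    refine le_trans ?_ (Con.le_innerContent (K.map f hf) ⟨V, hV⟩ h2)
    exact ENNReal.coe_le_coe.2 (hkey1 K)
  have hmap : μ.map f = μ := by
    refine Measure.ext fun A hA => ?_
    rw [Measure.map_apply hf.measurable hA]
    have h1 : μ (f ⁻¹' A) ≤ μ A := by
      rw [hμ, Con.measure_apply (hA.preimage hf.measurable), Con.measure_apply hA]
      exact hkey2 A
    have h2 : μ (f ⁻¹' A)ᶜ ≤ μ Aᶜ := by
      rw [hμ, Con.measure_apply (hA.preimage hf.measurable).compl, Con.measure_apply hA.compl,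
        ← Set.preimage_compl]
      exact hkey2 Aᶜ
    refine le_antisymm h1 ?_
    have e1 : μ (f ⁻¹' A) + μ (f ⁻¹' A)ᶜ = 1 := by
      haveI := hμprob
      exact (measure_add_measure_compl (hA.preimage hf.measurable)).trans hμuniv
    have e2 : μ A + μ Aᶜ = 1 := by
      haveI := hμprob
      exact (measure_add_measure_compl hA).trans hμuniv
    have : μ A + μ Aᶜ ≤ μ (f ⁻¹' A) + μ Aᶜ := by
      rw [e2, ← e1]
      exact add_le_add_right h2 _
    exact ENNReal.le_of_add_le_add_right (measure_ne_top μ Aᶜ) this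
  -- null complement of the closure of the tail orbit
  have hnull : μ ((closure {y | ∃ n, N ≤ n ∧ f^[n] x = y})ᶜ) = 0 := by
    set Kcl : Set X := closure {y | ∃ n, N ≤ n ∧ f^[n] x = y} with hKcl
    have hKclosed : IsClosed Kcl := isClosed_closure
    rw [hμ, Con.measure_apply hKclosed.measurableSet.compl,
      Con.outerMeasure_of_isOpen _ hKclosed.isOpen_compl]
    refine le_antisymm ?_ zero_le
    refine iSup_le fun K => iSup_le fun hK => ?_
    have hdisj : Disjoint Kcl (K : Set X) := by
      rw [Set.disjoint_right]
      intro z hz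
      exact hK hz
    obtain ⟨u, hu0, hu1, hu01⟩ := exists_continuous_zero_one_of_isClosed hKclosed
      K.isCompact.isClosed hdisj
    set g : X →ᵇ ℝ≥0 := BoundedContinuousFunction.mkOfCompact
      ⟨fun z => Real.toNNReal (u z), continuous_real_toNNReal.comp (map_continuous u)⟩ with hg
    have hgK : ∀ z ∈ (K : Set X), (1:ℝ≥0) ≤ g z := by
      intro z hz
      have : u z = 1 := hu1 hz
      simp [hg, this]
    have hgtail : ∀ n, N ≤ n → g (f^[n] x) = 0 := by
      intro n hn
      have hmem : f^[n] x ∈ Kcl := subset_closure ⟨n, hn, rfl⟩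
      have : u (f^[n] x) = 0 := hu0 hmem
      simp [hg, this]
    have hΛg : Λ g = 0 := by
      rw [hΛapp, hLtail g hgtail, Real.toNNReal_zero]
    have : rieszContentAux Λc K ≤ 0 := by
      have := rieszContentAux_le Λc
        (f := CompactlySupportedContinuousMap.continuousMapEquiv g.toContinuousMap) hgK
      have e : (CompactlySupportedContinuousMap.continuousMapEquiv
          g.toContinuousMap).toBoundedContinuousFunction = g := by ext z; rfl
      rw [hΛcapp] at this
      rwa [e, hΛg] at this
    have hzero : rieszContentAux Λc K = 0 := le_antisymm this zero_le
    simp [hCon, Content.mk_apply, hzero]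
  exact ⟨μ, hμprob, hmap, hnull⟩

/-- if `x` is completely-irregular and the system has the property that any
continuous function separating two invariant measures has nonempty irregular set, then
`supp ν ⊆ ω_f(x)`, i.e. `ν(ω_f(x)) = 1`, for every invariant probability measure `ν`. -/
theorem stmt9 {X : Type*} [MetricSpace X] [CompactSpace X] [MeasurableSpace X] [BorelSpace X]
    (f : X → X) (hf : Continuous f) (x : X)
    (hCI : ∀ φ : C(X, ℝ), (irregularSet f ⇑φ).Nonempty → x ∈ irregularSet f ⇑φ)
    (hspec : ∀ φ : C(X, ℝ),
      (∃ μ₁ ∈ invariantProb f, ∃ μ₂ ∈ invariantProb f, ∫ y, φ y ∂μ₁ ≠ ∫ y, φ y ∂μ₂) →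
      (irregularSet f ⇑φ).Nonempty) :
    ∀ ν ∈ invariantProb f, measSupport ν ⊆ omegaSet f x ∧ ν (omegaSet f x) = 1 := by
  intro ν hν
  obtain ⟨hνprob, hνinv⟩ := hν
  haveI := hνprob
  have hsub : measSupport ν ⊆ omegaSet f x := by
    intro y hy
    by_contra hyω
    rw [omegaSet, Set.mem_iInter] at hyω
    push_neg at hyω
    obtain ⟨N, hyN⟩ := hyω
    obtain ⟨u, hu0, hu1, hu01⟩ := exists_continuous_zero_one_of_isClosed
      (isClosed_closure (s := {z | ∃ n, N ≤ n ∧ f^[n] x = z})) isClosed_singleton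
      (Set.disjoint_singleton_right.2 hyN)
    have hconv : Filter.Tendsto (fun n => birkhoffAvg f (⇑u) n x) Filter.atTop (nhds 0) :=
      tendsto_birkhoffAvg_zero f _ x (fun n hn => hu0 (subset_closure ⟨n, hn, rfl⟩))
    obtain ⟨μ, hμprob, hμmap, hμnull⟩ := exists_invariant_measure_tail f hf x N
    haveI := hμprob
    have hμint : ∫ z, u z ∂μ = 0 := by
      have hae : ⇑u =ᵐ[μ] 0 := by
        refine measure_mono_null ?_ hμnull
        intro z hz
        simp only [Set.mem_setOf_eq] at hz
        intro hmem
        exact hz (hu0 hmem)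
      exact integral_eq_zero_of_ae hae
    have hint : Integrable (⇑u) ν :=
      u.continuous.integrable_of_hasCompactSupport (HasCompactSupport.of_compactSpace u)
    have hνint : 0 < ∫ z, u z ∂ν := by
      rw [integral_pos_iff_support_of_nonneg (fun z => (hu01 z).1) hint]
      refine lt_of_lt_of_le
        (hy (⇑u ⁻¹' Set.Ioi 0) (isOpen_Ioi.preimage u.continuous) ?_) (measure_mono ?_)
      · show (0:ℝ) < u y
        rw [hu1 rfl]
        norm_num
      · intro z hz
        exact ne_of_gt hz
    have hne : ∫ z, u z ∂μ ≠ ∫ z, u z ∂ν := by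
      rw [hμint]
      exact (ne_of_lt hνint)
    have hx := hCI u (hspec u ⟨μ, ⟨hμprob, hμmap⟩, ν, ⟨hνprob, hνinv⟩, hne⟩)
    exact hx ⟨0, hconv⟩
  refine ⟨hsub, ?_⟩
  have hωclosed : IsClosed (omegaSet f x) := isClosed_iInter fun N => isClosed_closure
  have hcompl : ν (omegaSet f x)ᶜ = 0 := by
    set S : Set (Set X) := {W | IsOpen W ∧ ν W = 0} with hS
    have hcov : (omegaSet f x)ᶜ ⊆ ⋃₀ S := by
      intro z hz
      have hzsupp : z ∉ measSupport ν := fun h => hz (hsub h)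
      simp only [measSupport, Set.mem_setOf_eq] at hzsupp
      push_neg at hzsupp
      obtain ⟨W, hWopen, hzW, hWpos⟩ := hzsupp
      exact ⟨W, ⟨hWopen, by simpa using hWpos⟩, hzW⟩
    obtain ⟨T, hTc, hTS, hTU⟩ := TopologicalSpace.isOpen_sUnion_countable S (fun W hW => hW.1)
    have hT0 : ν (⋃₀ T) = 0 := (measure_sUnion_null_iff hTc).2 fun W hW => (hTS hW).2
    exact le_antisymm (le_trans (measure_mono (hTU ▸ hcov)) hT0.le) zero_le
  exact (prob_compl_eq_zero_iff hωclosed.measurableSet).1 hcompl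
end
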